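/- Let q ≥ 2 and d be integers with d even, let w̄ = (w_1,...,w_{q-1}) be a composition with w = w_1+···+w_{q-1} ≥ 1 and 2 ≤ d ≤ 2w, and set t = (2w-d+2)/2 (so that t = ⌈(2w-d+1)/2⌉). Then for all sufficiently large integers n one has A_q(n,d,w̄) ≤ M(n)/(C(n-t,w-t)·f(w̄,w-t+1)), where M(n) = n!/((n-w)!·w_1!···w_{q-1}!) is the multinomial coefficient and C(a,b) denotes the binomial coefficient. -/

import Mathlib

open Finset

/-- `compOf q n x j` is the number of coordinates of `x` equal to the symbol `j+1`,
for `j : Fin (q-1)`; i.e. the composition of `x` (indexed so that index `j`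
corresponds to the symbol `j+1 ∈ {1,...,q-1}`). -/
def compOf (q n : ℕ) (x : Fin n → ℕ) (j : Fin (q - 1)) : ℕ :=
  (univ.filter fun i => x i = (j : ℕ) + 1).card

/-- `C` is an `(n,d,w̄)_q` constant composition code: a code over the alphabet
`{0,...,q-1}` of length `n`, constant composition `wb`, and minimum Hamming
distance at least `d`. -/
def IsCCC (q n d : ℕ) (wb : Fin (q - 1) → ℕ) (C : Finset (Fin n → ℕ)) : Prop :=
  (∀ x ∈ C, ∀ i, x i < q) ∧ (∀ x ∈ C, ∀ j, compOf q n x j = wb j) ∧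
  (∀ x ∈ C, ∀ y ∈ C, x ≠ y → d ≤ hammingDist x y)

/-- `Aqc q n d wb` is the maximum size of an `(n,d,w̄)_q` constant composition code. -/
noncomputable def Aqc (q n d : ℕ) (wb : Fin (q - 1) → ℕ) : ℕ :=
  sSup {m | ∃ C : Finset (Fin n → ℕ), IsCCC q n d wb C ∧ C.card = m}

/-- `fComp q wb t` is the maximum of the multinomial coefficient `t!/(t₁!⋯t_{q-1}!)`
over all `(w̄,t)`-admissible vectors `t̄`, i.e. those with `∑ tᵢ = t` and `tᵢ ≤ wᵢ`. -/
noncomputable def fComp (q : ℕ) (wb : Fin (q - 1) → ℕ) (t : ℕ) : ℕ :=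
  sSup {m | ∃ tb : Fin (q - 1) → ℕ, (∑ j, tb j) = t ∧ (∀ j, tb j ≤ wb j) ∧
    Nat.multinomial Finset.univ tb = m}

/-- The multinomial coefficient `M(n) = n! / ((n-w)! ⬝ w₁! ⋯ w_{q-1}!)`, as a real number. -/
noncomputable def Mn (q n w : ℕ) (wb : Fin (q - 1) → ℕ) : ℝ :=
  (Nat.factorial n : ℝ) /
    ((Nat.factorial (n - w) : ℝ) * ∏ j, (Nat.factorial (wb j) : ℝ))

/- ------------------------------------------------------------------ -/
/- Auxiliary lemmas                                                    -/
/- ------------------------------------------------------------------ -/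

section Aux

variable {n : ℕ}

lemma snoc_injective {m : ℕ} {e' : Fin m → Fin n} (h : Function.Injective e') (a : Fin n)
    (ha : ∀ k, e' k ≠ a) : Function.Injective (Fin.snoc e' a : Fin (m + 1) → Fin n) := by
  intro k1 k2 hk
  rcases Fin.eq_castSucc_or_eq_last k1 with ⟨j1, rfl⟩ | rfl <;>
    rcases Fin.eq_castSucc_or_eq_last k2 with ⟨j2, rfl⟩ | rfl
  · rw [Fin.snoc_castSucc, Fin.snoc_castSucc] at hk
    exact congrArg Fin.castSucc (h hk)
  · rw [Fin.snoc_castSucc, Fin.snoc_last] at hk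
    exact absurd hk (ha j1)
  · rw [Fin.snoc_castSucc, Fin.snoc_last] at hk
    exact absurd hk.symm (ha j2)
  · rfl

/-- The step lemma: extending injective tuples by one extra coordinate, when the number of
available values is constant. -/
lemma step_count (m : ℕ) (S' : Finset (Fin m → Fin n))
    (hS' : ∀ e' ∈ S', Function.Injective e')
    (Q : Fin n → Prop) [DecidablePred Q] (c : ℕ)
    (hc : ∀ e' ∈ S', (univ.filter fun a => Q a ∧ ∀ k, e' k ≠ a).card = c) :
    (univ.filter fun e : Fin (m + 1) → Fin n =>
      (e ∘ Fin.castSucc ∈ S') ∧ Function.Injective e ∧ Q (e (Fin.last m))).card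
      = S'.card * c := by
  classical
  have hmaps : ∀ e ∈ (univ.filter fun e : Fin (m + 1) → Fin n =>
      (e ∘ Fin.castSucc ∈ S') ∧ Function.Injective e ∧ Q (e (Fin.last m))),
      e ∘ Fin.castSucc ∈ S' := fun e he => (mem_filter.1 he).2.1
  rw [card_eq_sum_card_fiberwise hmaps]
  have key : ∀ e' ∈ S',
      (((univ.filter fun e : Fin (m + 1) → Fin n =>
        (e ∘ Fin.castSucc ∈ S') ∧ Function.Injective e ∧ Q (e (Fin.last m)))).filter
        fun e => e ∘ Fin.castSucc = e').card = c := by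
    intro e' he'
    rw [← hc e' he']
    apply Finset.card_nbij' (fun e => e (Fin.last m)) (fun a => Fin.snoc e' a)
    · intro e he
      simp only [mem_coe, mem_filter, mem_univ, true_and] at he ⊢
      obtain ⟨⟨_, hinj, hQ⟩, hres⟩ := he
      refine ⟨hQ, fun k hk => ?_⟩
      have h1 : e (Fin.castSucc k) = e' k := by rw [← hres]; rfl
      have h2 : Fin.castSucc k = Fin.last m := hinj (by rw [h1, hk])
      exact absurd h2 (Fin.castSucc_lt_last k).ne
    · intro a ha
      simp only [mem_coe, mem_filter, mem_univ, true_and] at ha ⊢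
      obtain ⟨hQ, hne⟩ := ha
      have hres : (Fin.snoc e' a : Fin (m + 1) → Fin n) ∘ Fin.castSucc = e' := by
        funext k; simp [Fin.snoc_castSucc]
      refine ⟨⟨by rw [hres]; exact he', ?_, by rw [Fin.snoc_last]; exact hQ⟩, hres⟩
      exact snoc_injective (hS' e' he') a hne
    · intro e he
      simp only [mem_coe, mem_filter, mem_univ, true_and] at he
      obtain ⟨⟨_, _, _⟩, hres⟩ := he
      funext k
      rcases Fin.eq_castSucc_or_eq_last k with ⟨j, rfl⟩ | rfl
      · simp only [Fin.snoc_castSucc]; rw [← hres]; rfl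
      · simp only [Fin.snoc_last]
    · intro a _
      simp only [Fin.snoc_last]
  rw [Finset.sum_congr rfl key, Finset.sum_const, smul_eq_mul]

lemma card_filter_castSucc (m : ℕ) (P : Fin (m + 1) → Prop) [DecidablePred P]
    (hP : ¬ P (Fin.last m)) :
    (univ.filter P).card = (univ.filter fun k : Fin m => P (Fin.castSucc k)).card := by
  symm
  apply Finset.card_nbij (fun k => Fin.castSucc k)
  · intro k hk
    simp only [mem_coe, mem_filter, mem_univ, true_and] at hk ⊢
    exact hk
  · exact (Fin.castSucc_injective m).injOn
  · intro b hb
    simp only [mem_coe, mem_filter, mem_univ, true_and] at hb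
    rcases Fin.eq_castSucc_or_eq_last b with ⟨k, rfl⟩ | rfl
    · exact ⟨k, by simpa using hb, rfl⟩
    · exact absurd hb hP

/-- Counting injective tuples realizing a prescribed pattern of values. -/
lemma chain_count (x : Fin n → ℕ) : ∀ (m : ℕ) (v : Fin m → ℕ),
    (univ.filter fun e : Fin m → Fin n =>
      Function.Injective e ∧ ∀ k, x (e k) = v k).card
    = ∏ k : Fin m, ((univ.filter fun i => x i = v k).card
        - (univ.filter fun l => l < k ∧ v l = v k).card)
  | 0, v => by
    rw [Finset.filter_true_of_mem, card_univ]
    · simp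
    · intro e _
      exact ⟨fun a b _ => a.elim0, fun k => k.elim0⟩
  | (m + 1), v => by
    classical
    set S' := univ.filter fun e' : Fin m → Fin n =>
      Function.Injective e' ∧ ∀ k, x (e' k) = v (Fin.castSucc k) with hS'def
    have hfilter : (univ.filter fun e : Fin (m + 1) → Fin n =>
        Function.Injective e ∧ ∀ k, x (e k) = v k)
        = univ.filter fun e => (e ∘ Fin.castSucc ∈ S') ∧ Function.Injective e
            ∧ x (e (Fin.last m)) = v (Fin.last m) := by
      apply filter_congr
      intro e _
      simp only [hS'def, mem_filter, mem_univ, true_and, Function.comp]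
      constructor
      · rintro ⟨hinj, hall⟩
        exact ⟨⟨hinj.comp (Fin.castSucc_injective m), fun k => hall _⟩, hinj, hall _⟩
      · rintro ⟨⟨_, hall'⟩, hinj, hlast⟩
        refine ⟨hinj, fun k => ?_⟩
        rcases Fin.eq_castSucc_or_eq_last k with ⟨j, rfl⟩ | rfl
        · exact hall' j
        · exact hlast
    have hc : ∀ e' ∈ S', (univ.filter fun a => x a = v (Fin.last m) ∧ ∀ k, e' k ≠ a).card
        = (univ.filter fun i => x i = v (Fin.last m)).card
          - (univ.filter fun k : Fin m => v (Fin.castSucc k) = v (Fin.last m)).card := by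
      intro e' he'
      obtain ⟨he'inj, he'v⟩ := (mem_filter.1 he').2
      have hset : (univ.filter fun a => x a = v (Fin.last m) ∧ ∀ k, e' k ≠ a)
          = (univ.filter fun a => x a = v (Fin.last m)) \
            ((univ.filter fun k : Fin m => v (Fin.castSucc k) = v (Fin.last m))).image e' := by
        ext a
        simp only [mem_filter, mem_sdiff, mem_image, mem_univ, true_and, not_exists]
        constructor
        · rintro ⟨hxa, hall⟩
          exact ⟨hxa, fun k hk => hall k hk.2⟩
        · rintro ⟨hxa, hnot⟩
          refine ⟨hxa, fun k hk => hnot k ⟨?_, hk⟩⟩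
          rw [← he'v k, hk, hxa]
      rw [hset, card_sdiff_of_subset, card_image_of_injective _ he'inj]
      intro a ha
      simp only [mem_image, mem_filter, mem_univ, true_and] at ha ⊢
      obtain ⟨k, hk, rfl⟩ := ha
      rw [he'v k, hk]
    rw [hfilter, step_count m S' (fun e' he' => (mem_filter.1 he').2.1) _ _ hc,
      chain_count x m (fun k => v (Fin.castSucc k)), Fin.prod_univ_castSucc]
    congr 1
    · apply Finset.prod_congr rfl
      intro k _
      congr 1
      rw [card_filter_castSucc m
        (fun l => l < Fin.castSucc k ∧ v l = v (Fin.castSucc k))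
        (fun h => absurd h.1 (lt_asymm (Fin.castSucc_lt_last k)))]
      apply congrArg
      apply filter_congr
      intro l _
      simp [Fin.castSucc_lt_castSucc_iff]
    · congr 1
      rw [card_filter_castSucc m (fun l => l < Fin.last m ∧ v l = v (Fin.last m))
        (fun h => lt_irrefl _ h.1)]
      apply congrArg
      apply filter_congr
      intro l _
      simp [Fin.castSucc_lt_last]

lemma rankProdAux {ι : Type*} [LinearOrder ι] (W : ℕ) (S : Finset ι) :
    ∏ k ∈ S, (W - (S.filter (· < k)).card) = W.descFactorial S.card := by
  classical
  induction S using Finset.induction_on_max with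
  | empty => simp
  | insert a S ha ih =>
    have haS : a ∉ S := fun h => lt_irrefl a (ha a h)
    rw [Finset.prod_insert haS]
    have h1 : (insert a S).filter (· < a) = S := by
      ext b
      simp only [mem_filter, mem_insert]
      constructor
      · rintro ⟨rfl | hb, hlt⟩
        · exact absurd hlt (lt_irrefl _)
        · exact hb
      · intro hb
        exact ⟨Or.inr hb, ha b hb⟩
    have h2 : ∀ k ∈ S, (insert a S).filter (· < k) = S.filter (· < k) := by
      intro k hk
      ext b
      simp only [mem_filter, mem_insert]
      constructor
      · rintro ⟨rfl | hb, hlt⟩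
        · exact absurd hlt (lt_asymm (ha k hk))
        · exact ⟨hb, hlt⟩
      · rintro ⟨hb, hlt⟩
        exact ⟨Or.inr hb, hlt⟩
    rw [h1, Finset.prod_congr rfl (fun k hk => by rw [h2 k hk]), ih,
      card_insert_of_notMem haS, Nat.descFactorial_succ]

lemma pattern_glue (r m' cl : ℕ) (p' : Fin m' → Fin r) :
    ∃ p : Fin (m' + cl) → Fin (r + 1),
      (∀ j : Fin r, (univ.filter fun k => p k = Fin.castSucc j).card
          = (univ.filter fun k => p' k = j).card)
      ∧ (univ.filter fun k => p k = Fin.last r).card = cl := by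
  classical
  have hcastAddInj : Function.Injective (Fin.castAdd cl : Fin m' → Fin (m' + cl)) :=
    fun a b h => Fin.ext (by simpa using congrArg Fin.val h)
  refine ⟨fun k => if h : (k : ℕ) < m' then Fin.castSucc (p' ⟨(k : ℕ), h⟩) else Fin.last r,
    ?_, ?_⟩
  · intro j
    symm
    apply Finset.card_nbij (fun k' => Fin.castAdd cl k')
    · intro k' hk'
      simp only [mem_coe, mem_filter, mem_univ, true_and] at hk' ⊢
      have hlt : ((Fin.castAdd cl k' : Fin (m' + cl)) : ℕ) < m' := k'.2
      rw [dif_pos hlt]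
      have heq : (⟨((Fin.castAdd cl k' : Fin (m' + cl)) : ℕ), hlt⟩ : Fin m') = k' :=
        Fin.ext rfl
      rw [heq, hk']
    · exact fun a _ b _ h => hcastAddInj h
    · intro k hk
      simp only [mem_coe, mem_filter, mem_univ, true_and] at hk
      by_cases h : (k : ℕ) < m'
      · refine ⟨⟨(k : ℕ), h⟩, ?_, Fin.ext rfl⟩
        simp only [mem_coe, mem_filter, mem_univ, true_and]
        rw [dif_pos h] at hk
        exact Fin.castSucc_injective r hk
      · exfalso
        rw [dif_neg h] at hk
        exact (Fin.castSucc_lt_last j).ne hk.symm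
  · have hfe : (univ.filter fun k : Fin (m' + cl) =>
        (if h : (k : ℕ) < m' then Fin.castSucc (p' ⟨(k : ℕ), h⟩) else Fin.last r) = Fin.last r)
        = univ.filter (fun k : Fin (m' + cl) => ¬ (k : ℕ) < m') := by
      apply filter_congr
      intro k _
      by_cases h : (k : ℕ) < m'
      · rw [dif_pos h]
        simp only [h, not_true_eq_false, iff_false]
        exact fun hc' => (Fin.castSucc_lt_last _).ne hc'
      · rw [dif_neg h]
        simp [h]
    have hlt : (univ.filter fun k : Fin (m' + cl) => (k : ℕ) < m')
        = univ.image (Fin.castAdd cl) := by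
      ext k
      simp only [mem_filter, mem_univ, true_and, mem_image]
      constructor
      · intro h
        exact ⟨⟨(k : ℕ), h⟩, Fin.ext rfl⟩
      · rintro ⟨k', _, rfl⟩
        exact k'.2
    have himg : (univ.image (Fin.castAdd cl : Fin m' → Fin (m' + cl))).card = m' := by
      rw [Finset.card_image_of_injective _ hcastAddInj, card_univ, Fintype.card_fin]
    have htot := Finset.card_filter_add_card_filter_not
      (s := (univ : Finset (Fin (m' + cl)))) (p := fun k => (k : ℕ) < m')
    rw [hlt, himg, card_univ, Fintype.card_fin] at htot
    rw [hfe]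
    omega

lemma exists_pattern : ∀ (r : ℕ) (c : Fin r → ℕ) (m : ℕ), m = (∑ j, c j) →
    ∃ p : Fin m → Fin r, ∀ j, (univ.filter fun k => p k = j).card = c j
  | 0, c, m, hm => by
    have hm0 : m = 0 := by simpa using hm
    subst hm0
    exact ⟨fun k => k.elim0, fun j => j.elim0⟩
  | (r + 1), c, m, hm => by
    classical
    obtain ⟨p', hp'⟩ := exists_pattern r (fun j => c (Fin.castSucc j))
      (∑ j : Fin r, c (Fin.castSucc j)) rfl
    have hmm : m = (∑ j : Fin r, c (Fin.castSucc j)) + c (Fin.last r) := by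
      rw [hm, Fin.sum_univ_castSucc]
    subst hmm
    obtain ⟨p, hp1, hp2⟩ := pattern_glue r _ (c (Fin.last r)) p'
    refine ⟨p, fun j => ?_⟩
    rcases Fin.eq_castSucc_or_eq_last j with ⟨j', rfl⟩ | rfl
    · rw [hp1 j', hp' j']
    · exact hp2

lemma supp_card (q : ℕ) (x : Fin n → ℕ) (hxq : ∀ i, x i < q) :
    (univ.filter fun i => x i ≠ 0).card
      = ∑ j : Fin (q - 1), (univ.filter fun i => x i = (j : ℕ) + 1).card := by
  classical
  have hset : (univ.filter fun i => x i ≠ 0)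
      = univ.biUnion (fun j : Fin (q - 1) => univ.filter fun i => x i = (j : ℕ) + 1) := by
    ext i
    simp only [mem_filter, mem_biUnion, mem_univ, true_and]
    constructor
    · intro h
      have hx := hxq i
      refine ⟨⟨x i - 1, by omega⟩, ?_⟩
      show x i = (x i - 1) + 1
      omega
    · rintro ⟨j, hj⟩
      omega
  rw [hset, Finset.card_biUnion]
  intro j _ j' hj' hjj'
  simp only [Finset.disjoint_left, mem_filter, mem_univ, true_and]
  intro i hi hi'
  exact hjj' (Fin.ext (by omega))

lemma exists_admissible (q : ℕ) (wb : Fin (q - 1) → ℕ) :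
    ∀ M, M ≤ ∑ j, wb j → ∃ s : Fin (q - 1) → ℕ, (∀ j, s j ≤ wb j) ∧ ∑ j, s j = M := by
  intro M
  induction M with
  | zero => exact fun _ => ⟨fun _ => 0, fun j => Nat.zero_le _, by simp⟩
  | succ M ih =>
    intro h
    obtain ⟨s, hs, hsum⟩ := ih (by omega)
    have hex : ∃ j, s j < wb j := by
      by_contra hcon
      push_neg at hcon
      have hle : ∑ j, wb j ≤ ∑ j, s j := Finset.sum_le_sum fun j _ => hcon j
      omega
    obtain ⟨j0, hj0⟩ := hex
    classical
    refine ⟨Function.update s j0 (s j0 + 1), fun j => ?_, ?_⟩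
    · rcases eq_or_ne j j0 with rfl | hne
      · rw [Function.update_self]
        omega
      · rw [Function.update_of_ne hne]
        exact hs j
    · rw [Finset.sum_update_of_mem (mem_univ j0)]
      have h2 : s j0 + ∑ x ∈ univ.erase j0, s x = ∑ x ∈ univ, s x :=
        Finset.add_sum_erase _ s (mem_univ j0)
      rw [← Finset.erase_eq]
      omega

/-- The per-codeword flag count. -/
lemma flag_count (q w m : ℕ) (wb : Fin (q - 1) → ℕ) (t' : Fin (q - 1) → ℕ)
    (p : Fin m → Fin (q - 1)) (hp : ∀ j, (univ.filter fun k => p k = j).card = t' j)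
    (hm : m = ∑ j, t' j)
    (x : Fin n → ℕ)
    (hcomp : ∀ j : Fin (q - 1), (univ.filter fun i => x i = (j : ℕ) + 1).card = wb j)
    (hsupp : (univ.filter fun i => x i ≠ 0).card = w) :
    (univ.filter fun e : Fin (m + 1) → Fin n =>
      Function.Injective e ∧ (∀ k : Fin m, x (e k.castSucc) = (p k : ℕ) + 1)
        ∧ x (e (Fin.last m)) ≠ 0).card
    = (∏ j : Fin (q - 1), (wb j).descFactorial (t' j)) * (w - m) := by
  classical
  set S' := univ.filter fun e' : Fin m → Fin n =>
    Function.Injective e' ∧ ∀ k, x (e' k) = (p k : ℕ) + 1 with hS'def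
  have hfilter : (univ.filter fun e : Fin (m + 1) → Fin n =>
      Function.Injective e ∧ (∀ k : Fin m, x (e k.castSucc) = (p k : ℕ) + 1)
        ∧ x (e (Fin.last m)) ≠ 0)
      = univ.filter fun e => (e ∘ Fin.castSucc ∈ S') ∧ Function.Injective e
          ∧ x (e (Fin.last m)) ≠ 0 := by
    apply filter_congr
    intro e _
    simp only [hS'def, mem_filter, mem_univ, true_and, Function.comp]
    constructor
    · rintro ⟨hinj, hall, hlast⟩
      exact ⟨⟨hinj.comp (Fin.castSucc_injective m), hall⟩, hinj, hlast⟩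
    · rintro ⟨⟨_, hall⟩, hinj, hlast⟩
      exact ⟨hinj, hall, hlast⟩
  have hc : ∀ e' ∈ S', (univ.filter fun a => x a ≠ 0 ∧ ∀ k, e' k ≠ a).card = w - m := by
    intro e' he'
    obtain ⟨he'inj, he'v⟩ := (mem_filter.1 he').2
    have hset : (univ.filter fun a => x a ≠ 0 ∧ ∀ k, e' k ≠ a)
        = (univ.filter fun a => x a ≠ 0) \ (univ.image e') := by
      ext a
      simp only [mem_filter, mem_sdiff, mem_image, mem_univ, true_and, not_exists]
      try tauto
    have hsub : (univ.image e') ⊆ (univ.filter fun a => x a ≠ 0) := by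
      intro a ha
      simp only [mem_image, mem_univ, true_and, mem_filter] at ha ⊢
      obtain ⟨k, _, rfl⟩ := ha
      rw [he'v k]
      simp
    rw [hset, card_sdiff_of_subset hsub, hsupp, Finset.card_image_of_injective _ he'inj,
      card_univ, Fintype.card_fin]
  rw [hfilter, step_count m S' (fun e' he' => (mem_filter.1 he').2.1) _ _ hc]
  congr 1
  rw [hS'def, chain_count x m (fun k => (p k : ℕ) + 1)]
  have hterm : ∀ k : Fin m,
      (univ.filter fun i => x i = (p k : ℕ) + 1).card
        - (univ.filter fun l => l < k ∧ (p l : ℕ) + 1 = (p k : ℕ) + 1).card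
      = wb (p k) - ((univ.filter fun l => p l = p k).filter (· < k)).card := by
    intro k
    rw [hcomp (p k)]
    congr 1
    rw [Finset.filter_filter]
    apply congrArg
    apply filter_congr
    intro l _
    constructor
    · rintro ⟨h1, h2⟩
      exact ⟨Fin.val_injective (by omega), h1⟩
    · rintro ⟨h1, h2⟩
      exact ⟨h2, by rw [h1]⟩
  rw [Finset.prod_congr rfl (fun k _ => hterm k)]
  rw [← Finset.prod_fiberwise_of_maps_to (g := p) (t := univ) (fun k _ => mem_univ _)]
  apply Finset.prod_congr rfl
  intro j _
  have hinner : ∀ k ∈ univ.filter (fun k => p k = j),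
      wb (p k) - ((univ.filter fun l => p l = p k).filter (· < k)).card
      = wb j - ((univ.filter fun l => p l = j).filter (· < k)).card := by
    intro k hk
    rw [(mem_filter.1 hk).2]
  rw [Finset.prod_congr rfl hinner, rankProdAux (wb j) (univ.filter fun l => p l = j),
    hp j]

/-- Flags of distinct codewords are disjoint. -/
lemma flags_disj (q w d m : ℕ) (p : Fin m → Fin (q - 1)) (x y : Fin n → ℕ)
    (hx : (univ.filter fun i => x i ≠ 0).card = w)
    (hy : (univ.filter fun i => y i ≠ 0).card = w)
    (hdist : d ≤ hammingDist x y) (hd : d = 2 * (w - m)) (hmw : m < w) :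
    Disjoint
      (univ.filter fun e : Fin (m + 1) → Fin n =>
        Function.Injective e ∧ (∀ k : Fin m, x (e k.castSucc) = (p k : ℕ) + 1)
          ∧ x (e (Fin.last m)) ≠ 0)
      (univ.filter fun e : Fin (m + 1) → Fin n =>
        Function.Injective e ∧ (∀ k : Fin m, y (e k.castSucc) = (p k : ℕ) + 1)
          ∧ y (e (Fin.last m)) ≠ 0) := by
  classical
  rw [Finset.disjoint_left]
  intro e hex hey
  simp only [mem_filter, mem_univ, true_and] at hex hey
  obtain ⟨hinj, hxp, hxl⟩ := hex
  obtain ⟨_, hyp, hyl⟩ := hey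
  have hpin : ∀ k : Fin (m + 1), x (e k) ≠ 0 ∧ y (e k) ≠ 0 := by
    intro k
    rcases Fin.eq_castSucc_or_eq_last k with ⟨j, rfl⟩ | rfl
    · rw [hxp j, hyp j]
      exact ⟨Nat.succ_ne_zero _, Nat.succ_ne_zero _⟩
    · exact ⟨hxl, hyl⟩
  set Sx := univ.filter fun i => x i ≠ 0 with hSx
  set Sy := univ.filter fun i => y i ≠ 0 with hSy
  set A := univ.filter fun i => x i = y i ∧ x i ≠ 0 with hA
  set D := univ.filter fun i => x i ≠ y i with hDdef
  have hDdist : hammingDist x y = D.card := rfl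
  have hAsub : A ⊆ Sx ∪ Sy := by
    intro i hi
    simp only [hA, hSx, hSy, mem_filter, mem_union, mem_univ, true_and] at hi ⊢
    exact Or.inl hi.2
  have hDsub : D ⊆ (Sx ∪ Sy) \ A := by
    intro i hi
    simp only [hDdef, hA, hSx, hSy, mem_filter, mem_sdiff, mem_union, mem_univ,
      true_and] at hi ⊢
    constructor
    · by_contra hcon
      push_neg at hcon
      obtain ⟨h1, h2⟩ := hcon
      exact hi (h1.trans h2.symm)
    · rintro ⟨h1, _⟩
      exact hi h1
  have hcard1 : D.card ≤ (Sx ∪ Sy).card - A.card := by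
    rw [← card_sdiff_of_subset hAsub]
    exact card_le_card hDsub
  have hcard2 : (Sx ∪ Sy).card + (Sx ∩ Sy).card = Sx.card + Sy.card :=
    card_union_add_card_inter _ _
  have hIsub : univ.image e ⊆ Sx ∩ Sy := by
    intro i hi
    simp only [mem_image, mem_univ, true_and] at hi
    obtain ⟨k, rfl⟩ := hi
    simp only [hSx, hSy, mem_inter, mem_filter, mem_univ, true_and]
    exact hpin k
  have hI : m + 1 ≤ (Sx ∩ Sy).card := by
    have : (univ.image e).card = m + 1 := by
      rw [card_image_of_injective _ hinj, card_univ, Fintype.card_fin]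
    rw [← this]
    exact card_le_card hIsub
  have hAcard : m ≤ A.card := by
    have hinj2 : Function.Injective (fun k : Fin m => e k.castSucc) :=
      hinj.comp (Fin.castSucc_injective m)
    have hsub2 : univ.image (fun k : Fin m => e k.castSucc) ⊆ A := by
      intro i hi
      simp only [mem_image, mem_univ, true_and] at hi
      obtain ⟨k, rfl⟩ := hi
      simp only [hA, mem_filter, mem_univ, true_and]
      rw [hxp k, hyp k]
      exact ⟨rfl, Nat.succ_ne_zero _⟩
    have : (univ.image (fun k : Fin m => e k.castSucc)).card = m := by
      rw [card_image_of_injective _ hinj2, card_univ, Fintype.card_fin]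
    rw [← this]
    exact card_le_card hsub2
  have hd' : d ≤ D.card := hDdist ▸ hdist
  have hxw : Sx.card = w := hx
  have hyw : Sy.card = w := hy
  omega

lemma card_inj_tuples (m : ℕ) :
    (univ.filter fun e : Fin m → Fin n => Function.Injective e).card
      = n.descFactorial m := by
  rw [← Fintype.card_subtype,
    Fintype.card_congr (Equiv.subtypeInjectiveEquivEmbedding (Fin m) (Fin n)),
    Fintype.card_embedding_eq, Fintype.card_fin, Fintype.card_fin]

end Aux

theorem stmt9 (q d w t : ℕ) (wb : Fin (q - 1) → ℕ) (hq : 2 ≤ q) (heven : Even d)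
    (hw : w = ∑ j, wb j) (hw1 : 1 ≤ w) (hd1 : 2 ≤ d) (hd2 : d ≤ 2 * w)
    (ht : 2 * t = 2 * w - d + 2) :
    ∃ N : ℕ, ∀ n : ℕ, N ≤ n →
      (Aqc q n d wb : ℝ) ≤
        Mn q n w wb /
          ((Nat.choose (n - t) (w - t) : ℝ) * (fComp q wb (w - t + 1) : ℝ)) := by
  classical
  obtain ⟨m, rfl⟩ : ∃ m, t = m + 1 := ⟨t - 1, by omega⟩
  have hd : d = 2 * (w - m) := by omega
  have hmw : m < w := by omega
  have hwm : w - (m + 1) + 1 = w - m := by omega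
  have hwmpos : 0 < w - m := by omega
  have hsub_idem : w - (w - m) = m := by omega
  -- a maximizing admissible vector for `fComp q wb (w - m)`
  have hfset : {mm | ∃ tb : Fin (q - 1) → ℕ, (∑ j, tb j) = w - m ∧ (∀ j, tb j ≤ wb j) ∧
      Nat.multinomial Finset.univ tb = mm}.Nonempty := by
    obtain ⟨s, hs1, hs2⟩ := exists_admissible q wb (w - m)
      (by rw [← hw]; exact Nat.sub_le _ _)
    exact ⟨Nat.multinomial univ s, s, hs2, hs1, rfl⟩
  have hfbdd : BddAbove {mm | ∃ tb : Fin (q - 1) → ℕ, (∑ j, tb j) = w - m ∧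
      (∀ j, tb j ≤ wb j) ∧ Nat.multinomial Finset.univ tb = mm} := by
    refine ⟨(w - m).factorial, ?_⟩
    rintro mm ⟨tb, hsum, _, rfl⟩
    have hspec := Nat.multinomial_spec univ tb
    calc Nat.multinomial univ tb
        ≤ (∏ i, (tb i).factorial) * Nat.multinomial univ tb :=
          Nat.le_mul_of_pos_left _ (Finset.prod_pos fun i _ => Nat.factorial_pos _)
      _ = (w - m).factorial := by rw [hspec, hsum]
  obtain ⟨sb, hsb_sum, hsb_le, hsb_mult0⟩ := Nat.sSup_mem hfset hfbdd
  have hsb_mult : Nat.multinomial univ sb = fComp q wb (w - m) := hsb_mult0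
  clear hsb_mult0 hfset hfbdd
  set t' : Fin (q - 1) → ℕ := fun j => wb j - sb j with ht'
  have ht'le : ∀ j, t' j ≤ wb j := fun j => Nat.sub_le _ _
  have ht'sum : m = ∑ j, t' j := by
    have h1 : ∑ j, t' j = (∑ j, wb j) - (∑ j, sb j) :=
      Finset.sum_tsub_distrib univ (fun j _ => hsb_le j)
    rw [h1, ← hw, hsb_sum, hsub_idem]
  obtain ⟨p, hp⟩ := exists_pattern (q - 1) t' m ht'sum
  set P := (∏ j : Fin (q - 1), (wb j).descFactorial (t' j)) * (w - m) with hPdef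
  have hPpos : 0 < P := by
    apply Nat.mul_pos
    · apply Finset.prod_pos
      intro j _
      refine Nat.pos_of_ne_zero fun h0 => ?_
      exact absurd (Nat.descFactorial_eq_zero_iff_lt.1 h0) (Nat.not_lt.2 (ht'le j))
    · exact hwmpos
  refine ⟨w, fun n hn => ?_⟩
  have hmn : m + 1 ≤ n := le_trans (by omega) hn
  have hcount : ∀ C : Finset (Fin n → ℕ), IsCCC q n d wb C →
      C.card * P ≤ n.descFactorial (m + 1) := by
    intro C hC
    obtain ⟨hCq, hCcomp, hCdist⟩ := hC
    set Fl : (Fin n → ℕ) → Finset (Fin (m + 1) → Fin n) := fun x => univ.filter fun e =>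
      Function.Injective e ∧ (∀ k : Fin m, x (e k.castSucc) = (p k : ℕ) + 1)
        ∧ x (e (Fin.last m)) ≠ 0 with hFl
    have hsuppC : ∀ x ∈ C, (univ.filter fun i => x i ≠ 0).card = w := by
      intro x hx
      rw [supp_card q x (hCq x hx), hw]
      exact Finset.sum_congr rfl fun j _ => hCcomp x hx j
    have hFlcard : ∀ x ∈ C, (Fl x).card = P := by
      intro x hx
      exact flag_count q w m wb t' p hp ht'sum x (fun j => hCcomp x hx j) (hsuppC x hx)
    have hdisj : ∀ x ∈ C, ∀ y ∈ C, x ≠ y → Disjoint (Fl x) (Fl y) := by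
      intro x hx y hy hxy
      exact flags_disj q w d m p x y (hsuppC x hx) (hsuppC y hy)
        (hCdist x hx y hy hxy) hd hmw
    calc C.card * P = ∑ x ∈ C, (Fl x).card := by
          rw [Finset.sum_congr rfl hFlcard, Finset.sum_const, smul_eq_mul]
      _ = (C.biUnion Fl).card := (Finset.card_biUnion hdisj).symm
      _ ≤ (univ.filter fun e : Fin (m + 1) → Fin n => Function.Injective e).card := by
          apply card_le_card
          intro e he
          simp only [mem_biUnion] at he
          obtain ⟨x, hx, hex⟩ := he
          simp only [hFl, mem_filter, mem_univ, true_and] at hex ⊢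
          exact hex.1
      _ = n.descFactorial (m + 1) := card_inj_tuples (m + 1)
  set K := n.descFactorial (m + 1) / P with hK
  have hAqcK : Aqc q n d wb ≤ K := by
    apply csSup_le
    · refine ⟨0, ∅, ⟨?_, ?_, ?_⟩, rfl⟩ <;>
        exact fun x hx => absurd hx (Finset.notMem_empty x)
    · rintro m' ⟨C, hC, rfl⟩
      rw [hK, Nat.le_div_iff_mul_le hPpos]
      exact hcount C hC
  rw [hwm]
  have h1 : (Aqc q n d wb : ℝ) ≤ (K : ℝ) := Nat.cast_le.2 hAqcK
  have h2 : (K : ℝ) ≤ (n.descFactorial (m + 1) : ℝ) / (P : ℝ) := Nat.cast_div_le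
  have h3 : (n.descFactorial (m + 1) : ℝ) / (P : ℝ)
      = Mn q n w wb /
        ((Nat.choose (n - (m + 1)) (w - (m + 1)) : ℝ) * (fComp q wb (w - m) : ℝ)) := by
    have hfact_ne : ∀ a : ℕ, ((a.factorial : ℝ)) ≠ 0 :=
      fun a => Nat.cast_ne_zero.2 (Nat.factorial_ne_zero a)
    have hprod_sb_ne : (∏ j : Fin (q - 1), ((sb j).factorial : ℝ)) ≠ 0 :=
      Finset.prod_ne_zero_iff.2 fun j _ => hfact_ne _
    have hprod_wb_ne : (∏ j : Fin (q - 1), ((wb j).factorial : ℝ)) ≠ 0 :=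
      Finset.prod_ne_zero_iff.2 fun j _ => hfact_ne _
    have hwm_ne : ((w - m : ℕ) : ℝ) ≠ 0 := by
      exact_mod_cast Nat.pos_iff_ne_zero.1 hwmpos
    have hA0 : (n - (m + 1)).factorial * n.descFactorial (m + 1) = n.factorial :=
      Nat.factorial_mul_descFactorial hmn
    have hA : (n.descFactorial (m + 1) : ℝ)
        = (n.factorial : ℝ) / ((n - (m + 1)).factorial : ℝ) := by
      rw [eq_div_iff (hfact_ne _)]
      exact_mod_cast (mul_comm ((n.descFactorial (m + 1))) _).trans hA0
    have hB0 : (n - (m + 1)).choose (w - (m + 1)) * ((w - (m + 1)).factorial *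
        ((n - w).factorial)) = (n - (m + 1)).factorial := by
      have h := Nat.choose_mul_factorial_mul_factorial
        (show w - (m + 1) ≤ n - (m + 1) by omega)
      rw [show (n - (m + 1)) - (w - (m + 1)) = n - w by omega] at h
      rw [← mul_assoc]
      exact h
    have hB : ((n - (m + 1)).choose (w - (m + 1)) : ℝ)
        = ((n - (m + 1)).factorial : ℝ) /
          (((w - (m + 1)).factorial : ℝ) * ((n - w).factorial : ℝ)) := by
      rw [eq_div_iff (mul_ne_zero (hfact_ne _) (hfact_ne _))]
      exact_mod_cast hB0
    have hC0 : (∏ i, (sb i).factorial) * Nat.multinomial univ sb = (w - m).factorial :=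
      (Nat.multinomial_spec univ sb).trans (by rw [hsb_sum])
    have hC : (fComp q wb (w - m) : ℝ)
        = ((w - m).factorial : ℝ) / (∏ j : Fin (q - 1), ((sb j).factorial : ℝ)) := by
      rw [eq_div_iff hprod_sb_ne, ← hsb_mult]
      have : ((Nat.multinomial univ sb : ℕ) : ℝ) * (∏ j : Fin (q - 1), ((sb j).factorial : ℝ))
          = (((∏ i, (sb i).factorial) * Nat.multinomial univ sb : ℕ) : ℝ) := by
        push_cast
        ring
      rw [this, hC0]
    have hD0 : ∀ j, (sb j).factorial * (wb j).descFactorial (t' j) = (wb j).factorial := by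
      intro j
      have h := Nat.factorial_mul_descFactorial (ht'le j)
      rwa [show wb j - t' j = sb j from by
        have := hsb_le j
        simp only [ht']
        omega] at h
    have hDprod : (∏ j : Fin (q - 1), ((sb j).factorial : ℝ)) *
        (∏ j : Fin (q - 1), ((wb j).descFactorial (t' j) : ℝ))
        = ∏ j : Fin (q - 1), ((wb j).factorial : ℝ) := by
      rw [← Finset.prod_mul_distrib]
      refine Finset.prod_congr rfl fun j _ => ?_
      exact_mod_cast congrArg (Nat.cast (R := ℝ)) (hD0 j)
    have hD : (P : ℝ) = (∏ j : Fin (q - 1), ((wb j).factorial : ℝ)) /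
        (∏ j : Fin (q - 1), ((sb j).factorial : ℝ)) * ((w - m : ℕ) : ℝ) := by
      rw [hPdef]
      push_cast
      rw [← hDprod]
      field_simp
    have hE : ((w - m).factorial : ℝ) = ((w - m : ℕ) : ℝ) * ((w - (m + 1)).factorial : ℝ) := by
      have h := Nat.mul_factorial_pred hwmpos.ne'
      rw [show w - m - 1 = w - (m + 1) by omega] at h
      exact_mod_cast h.symm
    have hMn : Mn q n w wb = (n.factorial : ℝ) /
        (((n - w).factorial : ℝ) * ∏ j : Fin (q - 1), ((wb j).factorial : ℝ)) := rfl
    rw [hMn, hA, hB, hC, hD, hE]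
    have hchne : ((n - (m + 1)).factorial : ℝ) /
        (((w - (m + 1)).factorial : ℝ) * ((n - w).factorial : ℝ)) ≠ 0 := by
      apply div_ne_zero (hfact_ne _) (mul_ne_zero (hfact_ne _) (hfact_ne _))
    field_simp
  calc (Aqc q n d wb : ℝ) ≤ (K : ℝ) := h1
    _ ≤ (n.descFactorial (m + 1) : ℝ) / (P : ℝ) := h2
    _ = _ := h3
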